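/- arXiv:2112.14383 — 6 statements merged into one kernel-verified Lean document; each statement's English description precedes it below -/
import Mathlib

section
/- Let (c_k)_{k≥1} be a sequence of real numbers with c_1 > 0 and c_{k+1} > 1 for all k ≥ 1. Let (A_j)_{j≥1} be a sequence of elements of W(c_k) with A_1 ≥ A_2 ≥ ⋯ > 1. Then lim_{j→∞} A_j exists and belongs to W(c_k). -/
/-- `Cprod c k = c 1 * c 2 * ⋯ * c k`. -/
noncomputable def Cprod (c : ℕ → ℝ) (k : ℕ) : ℝ := ∏ i ∈ Finset.Icc 1 k, c i

/-- The set `W(c_k)` of `A > 1` such that `⌊A ^ (c 1 ⋯ c k)⌋` is prime for every `k ≥ 1`. -/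
noncomputable def Wset (c : ℕ → ℝ) : Set ℝ :=
  {A : ℝ | 1 < A ∧ ∀ k : ℕ, 1 ≤ k → Prime ⌊A ^ Cprod c k⌋}

theorem limit_mem_Wset_of_antitone (c : ℕ → ℝ) (h1 : 0 < c 1)
    (h2 : ∀ k : ℕ, 1 ≤ k → 1 < c (k + 1))
    (A : ℕ → ℝ) (hA : ∀ j : ℕ, 1 ≤ j → A j ∈ Wset c)
    (hanti : ∀ j : ℕ, 1 ≤ j → A (j + 1) ≤ A j)
    (hgt : ∀ j : ℕ, 1 ≤ j → 1 < A j) :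
    ∃ L : ℝ, Filter.Tendsto A Filter.atTop (nhds L) ∧ L ∈ Wset c := by
  have hCprod_succ : ∀ n : ℕ, Cprod c (n + 1) = Cprod c n * c (n + 1) := by
    intro n
    simp [Cprod, Finset.prod_Icc_succ_top (Nat.le_add_left 1 n)]
  have hCpos : ∀ k : ℕ, 1 ≤ k → 0 < Cprod c k := by
    intro k hk
    induction k with
    | zero => omega
    | succ n ih =>
      rcases Nat.lt_or_ge 1 (n + 1) with h | h
      · have hn : 1 ≤ n := by omega
        rw [hCprod_succ]
        exact mul_pos (ih hn) (lt_trans one_pos (h2 n hn))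
      · have hn : n = 0 := by omega
        subst hn
        simpa [Cprod] using h1
  set B : ℕ → ℝ := fun j => A (j + 1) with hB
  have hBanti : Antitone B := antitone_nat_of_succ_le fun n => hanti (n + 1) (by omega)
  have hBdd : BddBelow (Set.range B) :=
    ⟨1, by rintro x ⟨j, rfl⟩; exact le_of_lt (hgt (j + 1) (by omega))⟩
  set L : ℝ := ⨅ j, B j with hLdef
  have htendB : Filter.Tendsto B Filter.atTop (nhds L) := tendsto_atTop_ciInf hBanti hBdd
  have htendA : Filter.Tendsto A Filter.atTop (nhds L) :=
    (Filter.tendsto_add_atTop_iff_nat 1).mp htendB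
  have hge2 : ∀ j k : ℕ, 1 ≤ j → 1 ≤ k → (2 : ℝ) ≤ A j ^ Cprod c k := by
    intro j k hj hk
    have hp := (hA j hj).2 k hk
    have hx1 : (1 : ℝ) < A j ^ Cprod c k :=
      Real.one_lt_rpow_iff_of_pos (lt_trans one_pos (hgt j hj)) |>.mpr
        (Or.inl ⟨hgt j hj, hCpos k hk⟩)
    have h1le : (1 : ℤ) ≤ ⌊A j ^ Cprod c k⌋ := Int.le_floor.mpr (by exact_mod_cast hx1.le)
    have hne1 : ⌊A j ^ Cprod c k⌋ ≠ 1 := fun h => hp.not_isUnit (h ▸ isUnit_one)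
    have h2le : (2 : ℤ) ≤ ⌊A j ^ Cprod c k⌋ := by omega
    calc (2 : ℝ) ≤ (⌊A j ^ Cprod c k⌋ : ℝ) := by exact_mod_cast h2le
      _ ≤ _ := Int.floor_le _
  have hc1 : Cprod c 1 = c 1 := by simp [Cprod]
  have hlow : ∀ j : ℕ, 1 ≤ j → (2 : ℝ) ^ (c 1)⁻¹ ≤ A j := by
    intro j hj
    have h := hge2 j 1 hj le_rfl
    rw [hc1] at h
    have hA0 : (0 : ℝ) ≤ A j := le_of_lt (lt_trans one_pos (hgt j hj))
    have h' : ((2 : ℝ) ^ (c 1)⁻¹) ^ (c 1) ≤ A j ^ (c 1) := by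
      rwa [Real.rpow_inv_rpow (by norm_num) (ne_of_gt h1)]
    exact (Real.rpow_le_rpow_iff (by positivity) hA0 h1).mp h'
  have hL1 : 1 < L := by
    have h2gt : (1 : ℝ) < (2 : ℝ) ^ (c 1)⁻¹ :=
      Real.one_lt_rpow_iff_of_pos (by norm_num) |>.mpr
        (Or.inl ⟨by norm_num, inv_pos.mpr h1⟩)
    have : (2 : ℝ) ^ (c 1)⁻¹ ≤ L :=
      le_ciInf fun j => hlow (j + 1) (by omega)
    linarith
  have hL0 : (0 : ℝ) < L := lt_trans one_pos hL1
  have hLle : ∀ j : ℕ, 1 ≤ j → L ≤ A j := by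
    intro j hj
    have := ciInf_le hBdd (j - 1)
    simpa [hB, Nat.succ_pred_eq_of_pos hj, Nat.sub_add_cancel hj] using this
  refine ⟨L, htendA, hL1, ?_⟩
  intro k hk
  have hCk := hCpos k hk
  have htendpow : Filter.Tendsto (fun j => A j ^ Cprod c k) Filter.atTop
      (nhds (L ^ Cprod c k)) := htendA.rpow_const (Or.inl (ne_of_gt hL0))
  have hlt : L ^ Cprod c k < (⌊L ^ Cprod c k⌋ : ℝ) + 1 := Int.lt_floor_add_one _
  have hev : ∀ᶠ j in Filter.atTop,
      A j ^ Cprod c k < (⌊L ^ Cprod c k⌋ : ℝ) + 1 :=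
    htendpow.eventually (eventually_lt_nhds hlt)
  obtain ⟨j, hjlt, hj1⟩ := (hev.and (Filter.eventually_ge_atTop 1)).exists
  have hmono : L ^ Cprod c k ≤ A j ^ Cprod c k :=
    Real.rpow_le_rpow hL0.le (hLle j hj1) hCk.le
  have hfloor_eq : ⌊A j ^ Cprod c k⌋ = ⌊L ^ Cprod c k⌋ := by
    have hle : ⌊L ^ Cprod c k⌋ ≤ ⌊A j ^ Cprod c k⌋ := Int.floor_le_floor hmono
    have hlt2 : ⌊A j ^ Cprod c k⌋ < ⌊L ^ Cprod c k⌋ + 1 := by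
      apply Int.floor_lt.mpr
      push_cast
      exact hjlt
    omega
  rw [← hfloor_eq]
  exact (hA j hj1).2 k hk
end

section
/- Let (c_k)_{k≥1} be a sequence of real numbers with c_1 > 0 and c_{k+1} > 1 for all k ≥ 1, and suppose that for every k ≥ 1 there exists an integer ν > k such that the product c_{k+1}·c_{k+2}⋯c_ν is a positive integer. Let (A_j)_{j≥1} be a bounded sequence of elements of W(c_k) with A_1 ≤ A_2 ≤ ⋯. Then lim_{j→∞} A_j exists and belongs to W(c_k). -/
open Filter

lemma aux_contra (n : ℤ) (m : ℕ) (hn : 2 ≤ n) (hm : 2 ≤ m)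
    (hp : Prime (n - 1)) (hq : Prime (n ^ m - 1)) : False := by
  have hn3 : 3 ≤ n := by
    rcases eq_or_lt_of_le hn with h | h
    · exfalso; rw [← h] at hp; norm_num at hp
    · omega
  have hd : (n - 1) ∣ (n ^ m - 1) := by
    simpa using sub_dvd_pow_sub_pow n 1 m
  have hpow : n ^ 2 ≤ n ^ m := pow_le_pow_right₀ (by omega) hm
  have hsq : n ^ 2 = n * n := sq n
  have hlt : n - 1 < n ^ m - 1 := by nlinarith
  obtain ⟨e, he⟩ := hd
  rcases hq.irreducible.isUnit_or_isUnit he with h | h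
  · rw [Int.isUnit_iff] at h; omega
  · rw [Int.isUnit_iff] at h
    rcases h with h | h <;> rw [h] at he <;> nlinarith

theorem limit_mem_Wset_of_monotone (c : ℕ → ℝ) (h1 : 0 < c 1)
    (h2 : ∀ k : ℕ, 1 ≤ k → 1 < c (k + 1))
    (h3 : ∀ k : ℕ, 1 ≤ k → ∃ ν : ℕ, k < ν ∧
      ∃ m : ℕ, 0 < m ∧ (∏ i ∈ Finset.Icc (k + 1) ν, c i) = (m : ℝ))
    (A : ℕ → ℝ) (hA : ∀ j : ℕ, 1 ≤ j → A j ∈ Wset c)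
    (hmono : ∀ j : ℕ, 1 ≤ j → A j ≤ A (j + 1))
    (hbdd : ∃ M : ℝ, ∀ j : ℕ, 1 ≤ j → A j ≤ M) :
    ∃ L : ℝ, Filter.Tendsto A Filter.atTop (nhds L) ∧ L ∈ Wset c := by
  -- positivity of partial products
  have hC : ∀ k : ℕ, 1 ≤ k → 0 < Cprod c k := by
    intro k hk
    apply Finset.prod_pos
    intro i hi
    rw [Finset.mem_Icc] at hi
    rcases eq_or_lt_of_le hi.1 with h | h
    · rw [← h]; exact h1
    · have := h2 (i - 1) (by omega)
      rw [Nat.sub_add_cancel (by omega)] at this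
      linarith
  -- product splitting
  have hsplit : ∀ k ν : ℕ, k ≤ ν →
      Cprod c ν = Cprod c k * ∏ i ∈ Finset.Icc (k + 1) ν, c i := by
    intro k ν hkν
    unfold Cprod
    rw [show (1:ℕ) = 0 + 1 from rfl, Finset.Icc_add_one_left_eq_Ioc, Finset.Icc_add_one_left_eq_Ioc,
      zero_add, Finset.Icc_add_one_left_eq_Ioc, Finset.prod_Ioc_consecutive _ (Nat.zero_le k) hkν]
  -- the limit
  set B : ℕ → ℝ := fun j => A (j + 1) with hB
  have hBmono : Monotone B := monotone_nat_of_le_succ fun j => hmono (j + 1) (by omega)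
  obtain ⟨M, hM⟩ := hbdd
  have hBbdd : BddAbove (Set.range B) := ⟨M, by rintro _ ⟨j, rfl⟩; exact hM (j + 1) (by omega)⟩
  set L : ℝ := ⨆ j, B j with hLdef
  have hBL : Tendsto B atTop (nhds L) := tendsto_atTop_ciSup hBmono hBbdd
  have hAL : Tendsto A atTop (nhds L) := (Filter.tendsto_add_atTop_iff_nat 1).mp hBL
  refine ⟨L, hAL, ?_⟩
  have hle : ∀ j : ℕ, 1 ≤ j → A j ≤ L := by
    intro j hj
    have := le_ciSup hBbdd (j - 1)
    simp only [hB] at this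
    rwa [Nat.sub_add_cancel hj] at this
  have hL1 : 1 < L := lt_of_lt_of_le (hA 1 le_rfl).1 (hle 1 le_rfl)
  by_cases hE : ∃ j : ℕ, 1 ≤ j ∧ A j = L
  · obtain ⟨j, hj, hjeq⟩ := hE
    exact hjeq ▸ hA j hj
  push_neg at hE
  have hltL : ∀ j : ℕ, 1 ≤ j → A j < L := fun j hj => lt_of_le_of_ne (hle j hj) (hE j hj)
  -- key: if L ^ Cprod c k' is an integer n, then n - 1 is prime
  have key : ∀ k' : ℕ, 1 ≤ k' → ∀ n : ℤ, L ^ Cprod c k' = (n : ℝ) → Prime (n - 1) := by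
    intro k' hk' n hn
    have ht : 0 < Cprod c k' := hC k' hk'
    have htend : Tendsto (fun j => A j ^ Cprod c k') atTop (nhds (L ^ Cprod c k')) :=
      hAL.rpow_const (Or.inr ht.le)
    rw [hn] at htend
    have h1' : ∀ᶠ j in atTop, (n : ℝ) - 1 < A j ^ Cprod c k' :=
      htend.eventually (eventually_gt_nhds (by linarith))
    obtain ⟨j, hjgt, hj1⟩ := (h1'.and (eventually_ge_atTop 1)).exists
    have hApos : (0:ℝ) ≤ A j := le_of_lt (lt_trans one_pos (hA j hj1).1)
    have hjlt : A j ^ Cprod c k' < (n : ℝ) := by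
      rw [← hn]
      exact Real.rpow_lt_rpow hApos (hltL j hj1) ht
    have hfl : ⌊A j ^ Cprod c k'⌋ = n - 1 := by
      rw [Int.floor_eq_iff]
      push_cast
      constructor <;> linarith
    have := (hA j hj1).2 k' hk'
    rwa [hfl] at this
  constructor
  · exact hL1
  intro k hk
  set t := Cprod c k with htdef
  have ht : 0 < t := hC k hk
  have hLt1 : 1 < L ^ t := Real.one_lt_rpow_iff_of_pos (by linarith) |>.mpr (Or.inl ⟨hL1, ht⟩)
  -- L ^ t is not an integer
  have hnotint : ¬ ∃ n : ℤ, L ^ t = (n : ℝ) := by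
    rintro ⟨n, hn⟩
    have hn2 : 2 ≤ n := by
      have : (1:ℝ) < (n:ℝ) := by rw [← hn]; exact hLt1
      exact_mod_cast this
    have hp := key k hk n hn
    obtain ⟨ν, hν, m, hm0, hmprod⟩ := h3 k hk
    have hm2 : 2 ≤ m := by
      have hone : (1:ℝ) < ∏ i ∈ Finset.Icc (k + 1) ν, c i := by
        have hne : (Finset.Icc (k + 1) ν).Nonempty := ⟨k + 1, Finset.mem_Icc.mpr ⟨le_rfl, hν⟩⟩
        have := Finset.prod_lt_prod_of_nonempty (f := fun _ => (1:ℝ))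
          (fun i _ => one_pos) (fun i hi => by
            rw [Finset.mem_Icc] at hi
            have := h2 (i - 1) (by omega)
            rwa [Nat.sub_add_cancel (by omega)] at this) hne
        simpa using this
      rw [hmprod] at hone
      exact_mod_cast Nat.lt_of_lt_of_le (by exact_mod_cast hone) le_rfl |>.nat_succ_le
    have hCν : L ^ Cprod c ν = ((n ^ m : ℤ) : ℝ) := by
      rw [hsplit k ν hν.le, hmprod, Real.rpow_mul (by linarith : (0:ℝ) ≤ L), ← htdef, hn,
        Real.rpow_natCast]
      push_cast
      ring
    have hq := key ν (hk.trans hν.le) (n ^ m) hCν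
    exact aux_contra n m hn2 hm2 hp hq
  -- since L ^ t is not an integer, ⌊L ^ t⌋ < L ^ t
  have hflt : (⌊L ^ t⌋ : ℝ) < L ^ t := by
    rcases lt_or_eq_of_le (Int.floor_le (L ^ t)) with h | h
    · exact h
    · exact absurd ⟨⌊L ^ t⌋, h.symm⟩ hnotint
  have htend : Tendsto (fun j => A j ^ t) atTop (nhds (L ^ t)) :=
    hAL.rpow_const (Or.inr ht.le)
  have h1' : ∀ᶠ j in atTop, (⌊L ^ t⌋ : ℝ) < A j ^ t :=
    htend.eventually (eventually_gt_nhds hflt)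
  obtain ⟨j, hjgt, hj1⟩ := (h1'.and (eventually_ge_atTop 1)).exists
  have hApos : (0:ℝ) ≤ A j := le_of_lt (lt_trans one_pos (hA j hj1).1)
  have hjlt : A j ^ t < L ^ t := Real.rpow_lt_rpow hApos (hltL j hj1) ht
  have hfl : ⌊A j ^ t⌋ = ⌊L ^ t⌋ := by
    rw [Int.floor_eq_iff]
    constructor
    · linarith
    · linarith [Int.lt_floor_add_one (L ^ t)]
  have := (hA j hj1).2 k hk
  rwa [hfl] at this
end

section
/- Let (c_k)_{k≥1} be a sequence of real numbers such that (i) c_1 > 0, (ii) c_{k+1} > 1 for all k ≥ 1, and (iii) for every k ≥ 1 there exists an integer ν > k such that c_{k+1}·c_{k+2}⋯c_ν is a positive integer. Then W(c_k) is a closed subset of ℝ. -/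
open Filter Topology

/-- An integer prime that is at least 1 is at least 2. -/
lemma int_prime_two_le {q : ℤ} (hq : Prime q) (h1 : 1 ≤ q) : 2 ≤ q := by
  have := hq.not_unit
  rw [Int.isUnit_iff] at this
  omega

theorem Wset_isClosed (c : ℕ → ℝ) (h1 : 0 < c 1)
    (h2 : ∀ k : ℕ, 1 ≤ k → 1 < c (k + 1))
    (h3 : ∀ k : ℕ, 1 ≤ k → ∃ ν : ℕ, k < ν ∧
      ∃ m : ℕ, 0 < m ∧ (∏ i ∈ Finset.Icc (k + 1) ν, c i) = (m : ℝ)) :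
    IsClosed (Wset c) := by
  have hcpos : ∀ i : ℕ, 1 ≤ i → 0 < c i := by
    intro i hi
    rcases Nat.exists_eq_add_of_le hi with ⟨j, rfl⟩
    cases j with
    | zero => simpa using h1
    | succ j =>
      have h := h2 (1 + j) (by omega)
      have e : 1 + (j + 1) = (1 + j) + 1 := by omega
      rw [e]; linarith
  have hCpos : ∀ k : ℕ, 1 ≤ k → 0 < Cprod c k := by
    intro k hk
    exact Finset.prod_pos fun i hi => hcpos i (Finset.mem_Icc.mp hi).1
  apply IsSeqClosed.isClosed
  intro A A₀ hmem hlim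
  have hA1 : ∀ n, 1 < A n := fun n => (hmem n).1
  have hApr : ∀ n (k : ℕ), 1 ≤ k → Prime ⌊A n ^ Cprod c k⌋ := fun n => (hmem n).2
  have hA₀1 : 1 ≤ A₀ := ge_of_tendsto hlim (Eventually.of_forall fun n => (hA1 n).le)
  have htend : ∀ Q : ℝ, Tendsto (fun n => A n ^ Q) atTop (𝓝 (A₀ ^ Q)) := fun Q =>
    ((Real.continuousAt_rpow_const A₀ Q (Or.inl (by linarith))).tendsto).comp hlim
  -- A₀ > 1
  have hA₀gt : 1 < A₀ := by
    have hC1 : Cprod c 1 = c 1 := by simp [Cprod]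
    have key : ∀ n, (2 : ℝ) ≤ A n ^ Cprod c 1 := by
      intro n
      have hgt1 : 1 < A n ^ Cprod c 1 := by
        rw [hC1]; exact Real.one_lt_rpow_iff_of_pos (by linarith [hA1 n]) |>.mpr
          (Or.inl ⟨hA1 n, h1⟩)
      have hfl1 : 1 ≤ ⌊A n ^ Cprod c 1⌋ := by
        rw [Int.le_floor]; exact_mod_cast hgt1.le
      have h2le : (2 : ℤ) ≤ ⌊A n ^ Cprod c 1⌋ := int_prime_two_le (hApr n 1 le_rfl) hfl1
      calc (2 : ℝ) ≤ (⌊A n ^ Cprod c 1⌋ : ℝ) := by exact_mod_cast h2le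
        _ ≤ A n ^ Cprod c 1 := Int.floor_le _
    have hlim2 : (2 : ℝ) ≤ A₀ ^ Cprod c 1 :=
      ge_of_tendsto (htend (Cprod c 1)) (Eventually.of_forall key)
    by_contra h
    push_neg at h
    have : A₀ = 1 := le_antisymm h hA₀1
    rw [this, Real.one_rpow] at hlim2
    linarith
  refine ⟨hA₀gt, fun k hk => ?_⟩
  set P := Cprod c k with hPdef
  have hP : 0 < P := hCpos k hk
  set N : ℤ := ⌊A₀ ^ P⌋ with hNdef
  have hAP1 : 1 < A₀ ^ P :=
    Real.one_lt_rpow_iff_of_pos (by linarith) |>.mpr (Or.inl ⟨hA₀gt, hP⟩)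
  by_cases hint : A₀ ^ P = (N : ℝ)
  · -- A₀ ^ P is exactly the integer N
    have hN2 : 2 ≤ N := by
      have : (1 : ℝ) < (N : ℝ) := hint ▸ hAP1
      have h' : (1 : ℤ) < N := by exact_mod_cast this
      omega
    by_cases hfa : ∃ᶠ n in atTop, A₀ ≤ A n
    · -- approach from the right (or equality): floor is N eventually on subsequence
      have hev : ∀ᶠ n in atTop, A n ^ P < (N : ℝ) + 1 :=
        (htend P).eventually_lt_const (by rw [hint]; linarith)
      obtain ⟨n, hge, hlt⟩ := (hfa.and_eventually hev).exists
      have hfl : ⌊A n ^ P⌋ = N := by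
        rw [Int.floor_eq_iff]
        refine ⟨?_, hlt⟩
        rw [← hint]
        exact Real.rpow_le_rpow (by linarith) hge hP.le
      exact hfl ▸ hApr n k hk
    · -- approach strictly from the left: derive a contradiction using (iii)
      exfalso
      have hevlt : ∀ᶠ n in atTop, A n < A₀ := by
        have := Filter.not_frequently.mp hfa
        simpa using this
      -- floor at level k is N - 1 eventually, hence N - 1 is prime
      have hev1 : ∀ᶠ n in atTop, (N : ℝ) - 1 < A n ^ P :=
        (htend P).eventually_const_lt (by rw [hint]; linarith)
      have hfloorNm1 : ∀ᶠ n in atTop, ⌊A n ^ P⌋ = N - 1 := by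
        filter_upwards [hevlt, hev1] with n hn1 hn2
        rw [Int.floor_eq_iff]
        constructor
        · push_cast; linarith
        · push_cast
          have : A n ^ P < A₀ ^ P := Real.rpow_lt_rpow (by linarith [hA1 n]) hn1 hP
          rw [hint] at this; linarith
      obtain ⟨n₀, hn₀⟩ := hfloorNm1.exists
      have hNm1prime : Prime (N - 1) := hn₀ ▸ hApr n₀ k hk
      have hN3 : 3 ≤ N := by
        have := int_prime_two_le hNm1prime (by omega)
        omega
      -- use hypothesis (iii)
      obtain ⟨ν, hkν, m, hm0, hmEq⟩ := h3 k hk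
      have hν1 : 1 ≤ ν := le_trans hk hkν.le
      have hsplit : Cprod c ν = P * ∏ i ∈ Finset.Icc (k + 1) ν, c i := by
        rw [hPdef]
        unfold Cprod
        have e1 : Finset.Icc 1 ν = Finset.Ioc 0 ν := by ext x; simp; omega
        have e2 : Finset.Icc 1 k = Finset.Ioc 0 k := by ext x; simp; omega
        have e3 : Finset.Icc (k + 1) ν = Finset.Ioc k ν := by ext x; simp
        rw [e1, e2, e3]
        exact (Finset.prod_Ioc_consecutive c (Nat.zero_le k) hkν.le).symm
      have hm2 : 2 ≤ m := by
        have hall : ∀ i ∈ Finset.Icc (k + 1) ν, (1 : ℝ) < c i := by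
          intro i hi
          obtain ⟨hi1, _⟩ := Finset.mem_Icc.mp hi
          obtain ⟨j, rfl⟩ := Nat.exists_eq_add_of_le (le_trans (by omega) hi1 :
            1 + 1 ≤ i)
          have e : 2 + j = (1 + j) + 1 := by omega
          rw [e]
          exact h2 (1 + j) (by omega)
        have hone : (1 : ℝ) < ∏ i ∈ Finset.Icc (k + 1) ν, c i := by
          have := Finset.prod_lt_prod_of_nonempty (f := fun _ => (1 : ℝ))
            (g := c) (s := Finset.Icc (k + 1) ν) (fun i _ => one_pos)
            hall ⟨k + 1, Finset.mem_Icc.mpr ⟨le_rfl, hkν⟩⟩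
          simpa using this
        rw [hmEq] at hone
        exact_mod_cast Nat.lt_iff_add_one_le.mp (by exact_mod_cast hone)
      have hQpos : 0 < Cprod c ν := hCpos ν hν1
      -- A₀ ^ Cprod c ν = N ^ m
      have hQval : A₀ ^ Cprod c ν = ((N ^ m : ℤ) : ℝ) := by
        rw [hsplit, hmEq, Real.rpow_mul (by linarith), hint, Real.rpow_natCast]
        push_cast; ring
      set M : ℤ := N ^ m with hMdef
      have hM9 : 9 ≤ M := by
        calc (9 : ℤ) = 3 ^ 2 := by norm_num
          _ ≤ N ^ 2 := by apply pow_le_pow_left₀ (by norm_num) hN3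
          _ ≤ N ^ m := pow_le_pow_right₀ (by omega) hm2
      -- floor at level ν is M - 1 eventually
      have hev1' : ∀ᶠ n in atTop, (M : ℝ) - 1 < A n ^ Cprod c ν :=
        (htend (Cprod c ν)).eventually_const_lt (by rw [hQval]; norm_num)
      have hfloorM : ∀ᶠ n in atTop, ⌊A n ^ Cprod c ν⌋ = M - 1 := by
        filter_upwards [hevlt, hev1'] with n hn1 hn2
        rw [Int.floor_eq_iff]
        constructor
        · push_cast; linarith
        · push_cast
          have : A n ^ Cprod c ν < A₀ ^ Cprod c ν :=
            Real.rpow_lt_rpow (by linarith [hA1 n]) hn1 hQpos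
          rw [hQval] at this; linarith
      obtain ⟨n₁, hn₁⟩ := hfloorM.exists
      have hMprime : Prime (M - 1) := hn₁ ▸ hApr n₁ ν hν1
      -- but M - 1 = N ^ m - 1 is divisible by N - 1, contradiction
      have hdvd : (N - 1) ∣ (M - 1) := by
        have := sub_dvd_pow_sub_pow N 1 m
        simpa [hMdef] using this
      obtain ⟨e, he⟩ := hdvd
      rcases hMprime.irreducible.isUnit_or_isUnit he with hu | hu
      · rw [Int.isUnit_iff] at hu; omega
      · rw [Int.isUnit_iff] at hu
        have hNm : N < M := by
          calc N < N ^ 2 := by nlinarith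
            _ ≤ N ^ m := pow_le_pow_right₀ (by omega) hm2
        rcases hu with rfl | rfl <;> omega
  · -- A₀ ^ P is not an integer: floor is locally constant
    have hlt1 : (N : ℝ) < A₀ ^ P := lt_of_le_of_ne (Int.floor_le _) (Ne.symm hint)
    have hlt2 : A₀ ^ P < (N : ℝ) + 1 := Int.lt_floor_add_one _
    have hev : ∀ᶠ n in atTop, A n ^ P ∈ Set.Ioo ((N : ℝ)) ((N : ℝ) + 1) :=
      (htend P).eventually (Ioo_mem_nhds hlt1 hlt2)
    obtain ⟨n, hn⟩ := hev.exists
    have hfl : ⌊A n ^ P⌋ = N := Int.floor_eq_iff.mpr ⟨hn.1.le, hn.2⟩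
    exact hfl ▸ hApr n k hk
end

section
/- Let (c_k)_{k≥1} be a sequence of real numbers with c_1 > 0 and c_{k+1} an integer with c_{k+1} ≥ 2 for all k ≥ 1. Let A ∈ W(c_k) and set p_k = ⌊A^{C_k}⌋ for all k ≥ 1. Then for every k ≥ 1, p_k^{c_{k+1}} ≤ p_{k+1} < (p_k + 1)^{c_{k+1}} − 1. -/
theorem pk_pow_le_pk_succ (c : ℕ → ℝ) (h1 : 0 < c 1)
    (h2 : ∀ k : ℕ, 1 ≤ k → (∃ m : ℤ, c (k + 1) = (m : ℝ)) ∧ 2 ≤ c (k + 1))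
    (A : ℝ) (hA : A ∈ Wset c)
    (p : ℕ → ℤ) (hp : ∀ k : ℕ, 1 ≤ k → p k = ⌊A ^ Cprod c k⌋) :
    ∀ k : ℕ, 1 ≤ k →
      (p k : ℝ) ^ c (k + 1) ≤ (p (k + 1) : ℝ) ∧
      (p (k + 1) : ℝ) < ((p k : ℝ) + 1) ^ c (k + 1) - 1 := by
  obtain ⟨hA1, hprime⟩ := hA
  have hA0 : (0:ℝ) ≤ A := le_of_lt (lt_trans one_pos hA1)
  have hCpos : ∀ k, 1 ≤ k → 0 < Cprod c k := by
    intro k hk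
    apply Finset.prod_pos
    intro i hi
    simp only [Finset.mem_Icc] at hi
    rcases Nat.eq_or_lt_of_le hi.1 with h | h
    · rw [← h]; exact h1
    · obtain ⟨j, rfl⟩ : ∃ j, i = j + 1 := ⟨i - 1, by omega⟩
      have := (h2 j (by omega)).2
      linarith
  intro k hk
  obtain ⟨⟨m, hm⟩, hm2⟩ := h2 k hk
  have hm2' : (2:ℤ) ≤ m := by
    have : (2:ℝ) ≤ (m:ℝ) := hm ▸ hm2
    exact_mod_cast this
  set n : ℕ := m.toNat with hn
  have hn2 : 2 ≤ n := by omega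
  have hmn : (m:ℝ) = (n:ℝ) := by
    have : ((n:ℤ):ℝ) = (n:ℝ) := by push_cast; ring
    rw [← this]
    congr 1
    omega
  set x := A ^ Cprod c k with hx
  have hx1 : 1 < x := by
    rw [hx]
    exact Real.one_lt_rpow_iff_of_pos (lt_trans one_pos hA1) |>.mpr (Or.inl ⟨hA1, hCpos k hk⟩)
  have hCsucc : Cprod c (k+1) = Cprod c k * c (k+1) :=
    Finset.prod_Icc_succ_top (by omega) _
  have hxsucc : A ^ Cprod c (k+1) = x ^ n := by
    rw [hCsucc, hm, hmn, Real.rpow_mul hA0, Real.rpow_natCast]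
  have hpk : p k = ⌊x⌋ := hp k hk
  have hpk1 : p (k+1) = ⌊x ^ n⌋ := by rw [hp (k+1) (by omega), hxsucc]
  have hPk : Prime (p k) := hpk ▸ hprime k hk
  have hPk1 : Prime (p (k+1)) := hpk1 ▸ (hxsucc ▸ hprime (k+1) (by omega))
  have hpk2 : 2 ≤ p k := by
    have hq := Int.prime_iff_natAbs_prime.mp hPk
    have h1 : 1 ≤ p k := by
      rw [hpk]; exact Int.le_floor.mpr (by push_cast; linarith)
    have := hq.two_le
    omega
  have hle : (p k : ℝ) ≤ x := hpk ▸ Int.floor_le x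
  have hlt : x < p k + 1 := hpk ▸ Int.lt_floor_add_one x
  have hpkr : (0:ℝ) ≤ (p k : ℝ) := by exact_mod_cast (by omega : (0:ℤ) ≤ p k)
  have hlow : p k ^ n ≤ p (k+1) := by
    rw [hpk1]
    apply Int.le_floor.mpr
    push_cast
    exact pow_le_pow_left₀ hpkr hle n
  have hupp : p (k+1) < (p k + 1) ^ n := by
    rw [hpk1]
    apply Int.floor_lt.mpr
    push_cast
    exact pow_lt_pow_left₀ hlt (le_trans zero_le_one (le_of_lt hx1)) (by omega)
  have hself : p k < p k ^ n := lt_self_pow₀ (by omega) (by omega)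
  have hne : p (k+1) ≠ (p k + 1) ^ n - 1 := by
    intro heq
    have hdvd : p k ∣ p (k+1) := by
      have h := sub_dvd_pow_sub_pow (p k + 1) 1 n
      simpa [heq] using h
    have h1' : (p k).natAbs ∣ (p (k+1)).natAbs := Int.natAbs_dvd_natAbs.mpr hdvd
    have hq : Nat.Prime (p (k+1)).natAbs := Int.prime_iff_natAbs_prime.mp hPk1
    rcases hq.eq_one_or_self_of_dvd _ h1' with h | h
    · omega
    · have : p k < p (k+1) := lt_of_lt_of_le hself hlow
      omega
  have huppstrict : p (k+1) < (p k + 1) ^ n - 1 := by omega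
  have hcrw : ∀ y : ℝ, y ^ c (k+1) = y ^ n := by
    intro y
    rw [hm, hmn, Real.rpow_natCast]
  constructor
  · rw [hcrw]
    exact_mod_cast hlow
  · rw [hcrw]
    have : ((p (k+1) : ℤ) : ℝ) < (((p k + 1) ^ n - 1 : ℤ) : ℝ) := by exact_mod_cast huppstrict
    push_cast at this
    linarith
end

section
/- Let D ≥ 2 be an integer. Then for every prime number p, there exists a prime factor q of D such that D/q ≤ ord((p+1)^{1/D}) ≤ D, where (p+1)^{1/D} denotes the positive real D-th root of p+1. -/
/-- The least positive integer `n` such that `α ^ n` is rational. -/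
noncomputable def ordQ (α : ℝ) : ℕ := sInf {n : ℕ | 0 < n ∧ ∃ q : ℚ, α ^ n = (q : ℝ)}

theorem ordQ_root_succ_prime (D : ℕ) (hD : 2 ≤ D) (p : ℕ) (hp : p.Prime) :
    ∃ q : ℕ, q.Prime ∧ q ∣ D ∧
      D / q ≤ ordQ (((p : ℝ) + 1) ^ ((1 : ℝ) / (D : ℝ))) ∧
      ordQ (((p : ℝ) + 1) ^ ((1 : ℝ) / (D : ℝ))) ≤ D := by
  set α : ℝ := ((p : ℝ) + 1) ^ ((1 : ℝ) / (D : ℝ)) with hα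
  set S : Set ℕ := {n : ℕ | 0 < n ∧ ∃ q : ℚ, α ^ n = (q : ℝ)} with hS
  have hp1 : (0 : ℝ) < (p : ℝ) + 1 := by positivity
  have hD0 : 0 < D := by omega
  have hαpos : 0 < α := Real.rpow_pos_of_pos hp1 _
  have hαD : α ^ D = (p : ℝ) + 1 := by
    rw [hα, ← Real.rpow_natCast (((p : ℝ) + 1) ^ ((1 : ℝ) / (D : ℝ))) D,
      ← Real.rpow_mul hp1.le, one_div, inv_mul_cancel₀ (by exact_mod_cast hD0.ne'),
      Real.rpow_one]
  have hDmem : D ∈ S := ⟨hD0, (p : ℚ) + 1, by rw [hαD]; push_cast; ring⟩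
  have hSne : S.Nonempty := ⟨D, hDmem⟩
  have hdmem : ordQ α ∈ S := Nat.sInf_mem hSne
  have hkey : ∀ x ∈ S, ordQ α ≤ x := fun x hx => Nat.sInf_le hx
  have hdle : ordQ α ≤ D := hkey D hDmem
  obtain ⟨hd0, r, hr⟩ := hdmem
  -- ordQ α divides D
  have hdvd : ordQ α ∣ D := by
    by_contra hnd
    have hmod : D % ordQ α ∈ S := by
      refine ⟨Nat.pos_of_ne_zero fun h => hnd (Nat.dvd_of_mod_eq_zero h), ?_⟩
      have hdec : α ^ D = (α ^ ordQ α) ^ (D / ordQ α) * α ^ (D % ordQ α) := by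
        rw [← pow_mul, ← pow_add, Nat.div_add_mod]
      have hne : (r : ℝ) ≠ 0 := by rw [← hr]; positivity
      refine ⟨((p : ℚ) + 1) / r ^ (D / ordQ α), ?_⟩
      have : α ^ (D % ordQ α) = ((p : ℝ) + 1) / ((r : ℝ)) ^ (D / ordQ α) := by
        rw [← hαD, hdec, hr]
        field_simp
      rw [this]
      push_cast
      ring
    have h1 := hkey _ hmod
    have hlt : D % ordQ α < ordQ α := Nat.mod_lt _ hd0
    omega
  obtain ⟨k, hk⟩ := hdvd
  have hk0 : 0 < k := by
    rcases Nat.eq_zero_or_pos k with h | h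
    · subst h; simp at hk; omega
    · exact h
  -- r ^ k = p + 1 in ℚ
  have hrk : r ^ k = (p : ℚ) + 1 := by
    have : ((r : ℝ)) ^ k = (p : ℝ) + 1 := by
      rw [← hr, ← pow_mul, ← hk, hαD]
    exact_mod_cast this
  -- r is a nonnegative integer
  have hrden : r.den = 1 := by
    have h1 : (r ^ k).den = 1 := by
      rw [hrk, show ((p : ℚ) + 1) = ((p + 1 : ℕ) : ℚ) by push_cast; ring]
      exact Rat.den_natCast _
    rw [Rat.den_pow] at h1
    exact (pow_eq_one_iff.mp h1).resolve_right (by omega)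
  have hrpos : 0 < r := by
    have : (0 : ℝ) < (r : ℝ) := by rw [← hr]; positivity
    exact_mod_cast this
  have hnum0 : (0 : ℤ) ≤ r.num := Rat.num_nonneg.mpr hrpos.le
  have hnumr : (r.num : ℚ) = r := by
    conv_rhs => rw [← Rat.num_div_den r]
    rw [hrden]
    push_cast
    ring
  set m : ℕ := r.num.toNat with hm
  have hmr : (m : ℚ) = r := by
    have : ((r.num.toNat : ℤ) : ℚ) = r := by rw [Int.toNat_of_nonneg hnum0]; exact hnumr
    exact_mod_cast this
  have hmk : m ^ k = p + 1 := by
    have : ((m : ℚ)) ^ k = (p : ℚ) + 1 := by rw [hmr, hrk]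
    exact_mod_cast this
  rcases eq_or_lt_of_le (show 1 ≤ k from hk0) with hk1 | hk2
  · -- k = 1, so ordQ α = D
    have hdD : ordQ α = D := by rw [hk, ← hk1]; omega
    refine ⟨D.minFac, Nat.minFac_prime (by omega), Nat.minFac_dvd D, ?_, hdle⟩
    rw [hdD]
    exact Nat.div_le_self _ _
  · -- k ≥ 2 : p = m ^ k - 1 is prime, hence m = 2 and k prime
    have hpk : p = m ^ k - 1 := by omega
    have hkp := Nat.prime_of_pow_sub_one_prime (a := m) (n := k) (by omega)
      (by rw [← hpk]; exact hp)
    refine ⟨k, hkp.2, ⟨ordQ α, by rw [hk, mul_comm]⟩, ?_, hdle⟩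
    have hdk : D / k = ordQ α := by rw [hk, Nat.mul_div_cancel _ (by omega : 0 < k)]
    omega
end

section
/- Let (c_k)_{k≥1} be a sequence of real numbers with c_1 > 0 and c_{k+1} an integer with c_{k+1} ≥ 2 for all k ≥ 1. Suppose (p_k)_{k≥1} is a sequence of prime numbers such that (a) p_k^{c_{k+1}} ≤ p_{k+1} < (p_k + 1)^{c_{k+1}} − 1 for all k ≥ 1, and (b) there exists k_0 ≥ 1 such that for all k ≥ k_0, p_{k+1} is the least prime number in the interval [p_k^{c_{k+1}}, (p_k + 1)^{c_{k+1}} − 1). Then A = lim_{k→∞} p_k^{1/C_k} exists and A ∈ ∂_L W(c_k). Moreover, if p_1 = 2 and k_0 = 1 can be taken in (b), then A is the minimum of W(c_k). -/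
/-- `U` is a connected component of `S` (as a subset of `ℝ`). -/
def IsCCompOf (U S : Set ℝ) : Prop := ∃ x ∈ S, U = connectedComponentIn S x

/-- The left sub-boundary of `X ⊆ ℝ`. -/
def subL (X : Set ℝ) : Set ℝ :=
  {A : ℝ | ∃ U : Set ℝ, IsCCompOf U Xᶜ ∧ BddAbove U ∧ A = sSup U}

theorem limit_mem_subL_and_min (c : ℕ → ℝ) (h1 : 0 < c 1)
    (h2 : ∀ k : ℕ, 1 ≤ k → (∃ m : ℤ, c (k + 1) = (m : ℝ)) ∧ 2 ≤ c (k + 1))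
    (p : ℕ → ℕ) (hp : ∀ k : ℕ, 1 ≤ k → (p k).Prime)
    (ha : ∀ k : ℕ, 1 ≤ k →
      (p k : ℝ) ^ c (k + 1) ≤ (p (k + 1) : ℝ) ∧
      (p (k + 1) : ℝ) < ((p k : ℝ) + 1) ^ c (k + 1) - 1)
    (k0 : ℕ) (hk0 : 1 ≤ k0)
    (hb : ∀ k : ℕ, k0 ≤ k → ∀ q : ℕ, q.Prime →
      (p k : ℝ) ^ c (k + 1) ≤ (q : ℝ) → (q : ℝ) < ((p k : ℝ) + 1) ^ c (k + 1) - 1 →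
      p (k + 1) ≤ q) :
    ∃ A : ℝ,
      Filter.Tendsto (fun k : ℕ => (p k : ℝ) ^ (1 / Cprod c k)) Filter.atTop (nhds A) ∧
      A ∈ subL (Wset c) ∧
      ((p 1 = 2 ∧ ∀ k : ℕ, 1 ≤ k → ∀ q : ℕ, q.Prime →
          (p k : ℝ) ^ c (k + 1) ≤ (q : ℝ) → (q : ℝ) < ((p k : ℝ) + 1) ^ c (k + 1) - 1 →
          p (k + 1) ≤ q) →
        IsLeast (Wset c) A) := by
  classical
  -- natural number exponents
  have hc : ∀ k : ℕ, ∃ m : ℕ, 1 ≤ k → (c (k + 1) = (m : ℝ) ∧ 2 ≤ m) := by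
    intro k
    by_cases hk : 1 ≤ k
    · obtain ⟨⟨m, hm⟩, h2'⟩ := h2 k hk
      have hm2 : (2 : ℤ) ≤ m := by
        have : (2 : ℝ) ≤ (m : ℝ) := hm ▸ h2'
        exact_mod_cast this
      refine ⟨m.toNat, fun _ => ⟨?_, ?_⟩⟩
      · rw [hm]
        have : ((m.toNat : ℤ) : ℝ) = (m : ℝ) := by rw [Int.toNat_of_nonneg (by omega)]
        exact_mod_cast this.symm
      · omega
    · exact ⟨0, fun h => absurd h hk⟩
  choose n hn using hc
  have hCsucc : ∀ k, Cprod c (k + 1) = Cprod c k * c (k + 1) := by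
    intro k
    simp only [Cprod]
    exact Finset.prod_Icc_succ_top (by omega) c
  have hC : ∀ k, 0 < Cprod c k := by
    intro k
    induction k with
    | zero =>
      rw [Cprod, Finset.Icc_eq_empty (by omega), Finset.prod_empty]
      norm_num
    | succ k ih =>
      rw [hCsucc k]
      have hck : 0 < c (k + 1) := by
        rcases Nat.eq_zero_or_pos k with h | h
        · subst h; exact h1
        · linarith [(h2 k h).2]
      exact mul_pos ih hck
  set a : ℕ → ℝ := fun k => (p k : ℝ) ^ (1 / Cprod c k) with ha_def
  set b : ℕ → ℝ := fun k => ((p k : ℝ) + 1) ^ (1 / Cprod c k) with hb_def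
  have hanneg : ∀ k, 0 ≤ a k := fun k => by
    simp only [ha_def]; positivity
  have hbnneg : ∀ k, 0 ≤ b k := fun k => by
    simp only [hb_def]; positivity
  have hapow : ∀ k, a k ^ Cprod c k = (p k : ℝ) := by
    intro k
    simp only [ha_def]
    rw [← Real.rpow_mul (Nat.cast_nonneg _), one_div_mul_cancel (hC k).ne', Real.rpow_one]
  have hbpow : ∀ k, b k ^ Cprod c k = (p k : ℝ) + 1 := by
    intro k
    simp only [hb_def]
    rw [← Real.rpow_mul (by positivity), one_div_mul_cancel (hC k).ne', Real.rpow_one]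
  have hle_of_pow : ∀ (x y : ℝ) (k : ℕ), 0 ≤ x → 0 ≤ y →
      x ^ Cprod c k ≤ y ^ Cprod c k → x ≤ y :=
    fun x y k hx hy h => (Real.rpow_le_rpow_iff hx hy (hC k)).mp h
  have hlt_of_pow : ∀ (x y : ℝ) (k : ℕ), 0 ≤ x → 0 ≤ y →
      x ^ Cprod c k < y ^ Cprod c k → x < y :=
    fun x y k hx hy h => (Real.rpow_lt_rpow_iff hx hy (hC k)).mp h
  have hCpow : ∀ (x : ℝ), 0 ≤ x → ∀ k, 1 ≤ k →
      x ^ Cprod c (k + 1) = (x ^ Cprod c k) ^ (n k) := by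
    intro x hx k hk
    rw [hCsucc k, (hn k hk).1, Real.rpow_mul hx, Real.rpow_natCast]
  -- integer step inequalities
  have hpstep : ∀ k, 1 ≤ k → p k ^ n k < p (k + 1) := by
    intro k hk
    obtain ⟨hcn, hn2⟩ := hn k hk
    have h1' := (ha k hk).1
    rw [hcn, Real.rpow_natCast] at h1'
    have hle : p k ^ n k ≤ p (k + 1) := by exact_mod_cast h1'
    rcases lt_or_eq_of_le hle with h | h
    · exact h
    · exfalso
      have hpr := hp (k + 1) (by omega)
      rw [← h] at hpr
      have hpk2 := (hp k hk).two_le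
      have hdvd : p k ∣ p k ^ n k := dvd_pow_self _ (by omega)
      have hlt : p k < p k ^ n k := by
        calc p k < p k * p k := by nlinarith
        _ = p k ^ 2 := by ring
        _ ≤ p k ^ n k := Nat.pow_le_pow_right (by omega) hn2
      rcases hpr.eq_one_or_self_of_dvd (p k) hdvd with h' | h' <;> omega
  have hbstepN : ∀ k, 1 ≤ k → p (k + 1) + 1 < (p k + 1) ^ n k := by
    intro k hk
    obtain ⟨hcn, hn2⟩ := hn k hk
    have h2' := (ha k hk).2
    rw [hcn, Real.rpow_natCast] at h2'
    have : ((p (k + 1) + 1 : ℕ) : ℝ) < (((p k + 1) ^ n k : ℕ) : ℝ) := by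
      push_cast
      linarith
    exact_mod_cast this
  have hastep : ∀ k, 1 ≤ k → a k < a (k + 1) := by
    intro k hk
    apply hlt_of_pow _ _ (k + 1) (hanneg k) (hanneg (k + 1))
    rw [hCpow (a k) (hanneg k) k hk, hapow k, hapow (k + 1)]
    have := hpstep k hk
    have : ((p k ^ n k : ℕ) : ℝ) < ((p (k + 1) : ℕ) : ℝ) := by exact_mod_cast this
    push_cast at this ⊢
    linarith
  have hbstep : ∀ k, 1 ≤ k → b (k + 1) < b k := by
    intro k hk
    apply hlt_of_pow _ _ (k + 1) (hbnneg (k + 1)) (hbnneg k)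
    rw [hCpow (b k) (hbnneg k) k hk, hbpow k, hbpow (k + 1)]
    have := hbstepN k hk
    have : ((p (k + 1) + 1 : ℕ) : ℝ) < (((p k + 1) ^ n k : ℕ) : ℝ) := by exact_mod_cast this
    push_cast at this ⊢
    linarith
  have haltb : ∀ k, 1 ≤ k → a k < b k := by
    intro k _
    apply hlt_of_pow _ _ k (hanneg k) (hbnneg k)
    rw [hapow k, hbpow k]
    linarith
  have hamono : ∀ j k, 1 ≤ j → j ≤ k → a j ≤ a k := by
    intro j k hj hjk
    induction k, hjk using Nat.le_induction with
    | base => exact le_rfl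
    | succ k hk ih => exact ih.trans (hastep k (hj.trans hk)).le
  have hbanti : ∀ j k, 1 ≤ j → j ≤ k → b k ≤ b j := by
    intro j k hj hjk
    induction k, hjk using Nat.le_induction with
    | base => exact le_rfl
    | succ k hk ih => exact (hbstep k (hj.trans hk)).le.trans ih
  have hab : ∀ j k, 1 ≤ j → 1 ≤ k → a j ≤ b k := by
    intro j k hj hk
    rcases le_total j k with h | h
    · exact (hamono j k hj h).trans (haltb k hk).le
    · exact (haltb j hj).le.trans (hbanti k j hk h)
  have hmono : Monotone (fun j : ℕ => a (j + 1)) :=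
    monotone_nat_of_le_succ fun j => (hastep (j + 1) (by omega)).le
  have hbdd : BddAbove (Set.range fun j : ℕ => a (j + 1)) := by
    refine ⟨b 1, ?_⟩
    rintro x ⟨j, rfl⟩
    exact hab (j + 1) 1 (by omega) le_rfl
  set A := ⨆ j : ℕ, a (j + 1) with hA_def
  have htend : Filter.Tendsto a Filter.atTop (nhds A) :=
    (Filter.tendsto_add_atTop_iff_nat 1).mp (tendsto_atTop_ciSup hmono hbdd)
  have hleA : ∀ k, 1 ≤ k → a k ≤ A := by
    intro k hk
    obtain ⟨j, rfl⟩ : ∃ j, k = j + 1 := ⟨k - 1, by omega⟩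
    exact le_ciSup hbdd j
  have hAle : ∀ x : ℝ, (∀ k, 1 ≤ k → a k ≤ x) → A ≤ x :=
    fun x hx => ciSup_le fun j => hx (j + 1) (by omega)
  have hAltb : ∀ k, 1 ≤ k → A < b k := fun k hk =>
    lt_of_le_of_lt (hAle (b (k + 1)) fun j hj => hab j (k + 1) hj (by omega)) (hbstep k hk)
  have hA1 : 1 < A := by
    refine lt_of_lt_of_le ?_ (hleA 1 le_rfl)
    simp only [ha_def]
    have hp1pos : (0:ℝ) ≤ (p 1 : ℝ) := Nat.cast_nonneg _
    rw [Real.one_lt_rpow_iff hp1pos]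
    left
    constructor
    · have := (hp 1 le_rfl).two_le
      have : (2:ℝ) ≤ (p 1 : ℝ) := by exact_mod_cast this
      linarith
    · exact one_div_pos.mpr (hC 1)
  have hApos : (0:ℝ) ≤ A := by linarith
  have hAW : A ∈ Wset c := by
    refine ⟨hA1, fun k hk => ?_⟩
    have h1' : (p k : ℝ) ≤ A ^ Cprod c k := by
      rw [← hapow k]
      exact Real.rpow_le_rpow (hanneg k) (hleA k hk) (hC k).le
    have h2' : A ^ Cprod c k < (p k : ℝ) + 1 := by
      rw [← hbpow k]
      exact Real.rpow_lt_rpow hApos (hAltb k hk) (hC k)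
    have hfl : ⌊A ^ Cprod c k⌋ = (p k : ℤ) := by
      rw [Int.floor_eq_iff]
      constructor <;> push_cast <;> linarith
    rw [hfl]
    exact Nat.prime_iff_prime_int.mp (hp k hk)
  -- key induction lemma
  have key : ∀ K : ℕ, 1 ≤ K →
      (∀ k, K ≤ k → ∀ q : ℕ, q.Prime → (p k : ℝ) ^ c (k + 1) ≤ (q : ℝ) →
        (q : ℝ) < ((p k : ℝ) + 1) ^ c (k + 1) - 1 → p (k + 1) ≤ q) →
      ∀ B : ℝ, B ∈ Wset c → (p K : ℤ) ≤ ⌊B ^ Cprod c K⌋ →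
      ∀ k, K ≤ k → (p k : ℤ) ≤ ⌊B ^ Cprod c k⌋ := by
    intro K hK hbK B hB hbase k hKk
    induction k, hKk using Nat.le_induction with
    | base => exact hbase
    | succ k hKk ih =>
      obtain ⟨hB1, hBpr⟩ := hB
      have hk1 : 1 ≤ k := hK.trans hKk
      obtain ⟨hcn, hn2⟩ := hn k hk1
      set q : ℤ := ⌊B ^ Cprod c k⌋ with hq_def
      set q' : ℤ := ⌊B ^ Cprod c (k + 1)⌋ with hq'_def
      have hqpr : Prime q := hBpr k hk1
      have hq'pr : Prime q' := hBpr (k + 1) (by omega)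
      have hpk2 : (2 : ℤ) ≤ (p k : ℤ) := by exact_mod_cast (hp k hk1).two_le
      have hq2 : (2 : ℤ) ≤ q := le_trans hpk2 ih
      have hql : (q : ℝ) ≤ B ^ Cprod c k := Int.floor_le _
      have hqu : B ^ Cprod c k < (q : ℝ) + 1 := by
        have := Int.lt_floor_add_one (B ^ Cprod c k)
        push_cast at this
        exact this
      have hBnn : (0 : ℝ) ≤ B := by linarith
      have hsplit : B ^ Cprod c (k + 1) = (B ^ Cprod c k) ^ (n k) := hCpow B hBnn k hk1
      have hlow : q ^ n k ≤ q' := by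
        apply Int.le_floor.mpr
        rw [hsplit]
        push_cast
        exact pow_le_pow_left₀ (by exact_mod_cast hq2.trans' (by norm_num) : (0:ℝ) ≤ (q:ℝ)) hql (n k)
      have hup : q' < (q + 1) ^ n k := by
        apply Int.floor_lt.mpr
        rw [hsplit]
        push_cast
        exact pow_lt_pow_left₀ hqu (by positivity) (by omega)
      have hq'pos : 0 < q' := lt_of_lt_of_le (pow_pos (by omega) _) hlow
      have hne : q' ≠ (q + 1) ^ n k - 1 := by
        intro heq
        have hdvd : q ∣ q' := by
          rw [heq]
          have h := sub_dvd_pow_sub_pow (q + 1) 1 (n k)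
          simpa using h
        obtain ⟨t, ht⟩ := hdvd
        have hsq : (q + 1) ^ 2 ≤ (q + 1) ^ n k := pow_le_pow_right₀ (by omega) hn2
        rcases hq'pr.irreducible.isUnit_or_isUnit ht with h | h <;> rw [Int.isUnit_iff] at h
        · omega
        · rcases h with h | h <;> rw [h] at ht <;> nlinarith
      have hup' : q' < (q + 1) ^ n k - 1 := by
        set M := (q + 1) ^ n k with hM
        omega
      have hplow : (p k : ℤ) ^ n k ≤ q' :=
        le_trans (pow_le_pow_left₀ (by omega) ih (n k)) hlow
      by_cases hcase : (q' : ℝ) < ((p k : ℝ) + 1) ^ c (k + 1) - 1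
      · have hq'nat : ((q'.toNat : ℤ)) = q' := Int.toNat_of_nonneg hq'pos.le
        have hprnat : (q'.toNat).Prime := by
          apply Nat.prime_iff_prime_int.mpr
          rw [hq'nat]
          exact hq'pr
        have hlow' : (p k : ℝ) ^ c (k + 1) ≤ (q'.toNat : ℝ) := by
          rw [hcn, Real.rpow_natCast]
          have h' : ((p k : ℤ) ^ n k : ℤ) ≤ (q'.toNat : ℤ) := by rw [hq'nat]; exact hplow
          exact_mod_cast h'
        have hup'' : ((q'.toNat : ℕ) : ℝ) < ((p k : ℝ) + 1) ^ c (k + 1) - 1 := by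
          have hcast : ((q'.toNat : ℕ) : ℝ) = (q' : ℝ) := by exact_mod_cast hq'nat
          rw [hcast]; exact hcase
        have hfin := hbK k hKk q'.toNat hprnat hlow' hup''
        have : (p (k + 1) : ℤ) ≤ (q'.toNat : ℤ) := by exact_mod_cast hfin
        rw [hq'nat] at this
        exact this
      · push_neg at hcase
        have h2' := (ha k hk1).2
        have : (p (k + 1) : ℝ) < (q' : ℝ) := lt_of_lt_of_le h2' hcase
        exact_mod_cast this.le
  have haleB : ∀ B : ℝ, 1 < B → ∀ k, 1 ≤ k → (p k : ℤ) ≤ ⌊B ^ Cprod c k⌋ → a k ≤ B := by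
    intro B hB k hk h'
    have h2'' : (p k : ℝ) ≤ B ^ Cprod c k := by
      calc (p k : ℝ) = ((p k : ℤ) : ℝ) := by push_cast; ring
        _ ≤ (⌊B ^ Cprod c k⌋ : ℝ) := by exact_mod_cast h'
        _ ≤ _ := Int.floor_le _
    apply hle_of_pow _ _ k (hanneg k) (by linarith)
    rw [hapow k]
    exact h2''
  have hBnotW : ∀ B : ℝ, a k0 ≤ B → B < A → B ∉ Wset c := by
    intro B hB1 hB2 hBW
    have hBgt1 := hBW.1
    have hbase : (p k0 : ℤ) ≤ ⌊B ^ Cprod c k0⌋ := by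
      apply Int.le_floor.mpr
      have : (p k0 : ℝ) ≤ B ^ Cprod c k0 := by
        rw [← hapow k0]
        exact Real.rpow_le_rpow (hanneg k0) hB1 (hC k0).le
      exact_mod_cast this
    have hall := key k0 hk0 hb B hBW hbase
    have hgeB : A ≤ B := by
      apply hAle
      intro k hk
      rcases le_total k k0 with h | h
      · exact (hamono k k0 hk h).trans hB1
      · exact haleB B hBgt1 k hk (hall k h)
    linarith
  have hak0A : a k0 < A := lt_of_lt_of_le (hastep k0 hk0) (hleA (k0 + 1) (by omega))
  have hak0 : a k0 ∈ (Wset c)ᶜ := hBnotW (a k0) le_rfl hak0A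
  have hsubL : A ∈ subL (Wset c) := by
    have hIco : Set.Ico (a k0) A ⊆ (Wset c)ᶜ := fun x hx => hBnotW x hx.1 hx.2
    have hIcoU : Set.Ico (a k0) A ⊆ connectedComponentIn (Wset c)ᶜ (a k0) :=
      isPreconnected_Ico.subset_connectedComponentIn ⟨le_rfl, hak0A⟩ hIco
    have hUsub : connectedComponentIn (Wset c)ᶜ (a k0) ⊆ Set.Iio A := by
      intro y hy
      by_contra hy'
      rw [Set.mem_Iio, not_lt] at hy'
      have hord := (isPreconnected_connectedComponentIn (x := a k0)
        (F := (Wset c)ᶜ)).ordConnected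
      have hAin : A ∈ connectedComponentIn (Wset c)ᶜ (a k0) :=
        hord.out (mem_connectedComponentIn hak0) hy ⟨hak0A.le, hy'⟩
      exact (connectedComponentIn_subset _ _ hAin) hAW
    have hUbdd : BddAbove (connectedComponentIn (Wset c)ᶜ (a k0)) :=
      ⟨A, fun y hy => (hUsub hy).le⟩
    refine ⟨connectedComponentIn (Wset c)ᶜ (a k0), ⟨a k0, hak0, rfl⟩, hUbdd, ?_⟩
    apply le_antisymm
    · rw [← csSup_Ico hak0A]
      exact csSup_le_csSup hUbdd (Set.nonempty_Ico.mpr hak0A) hIcoU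
    · exact csSup_le ⟨a k0, mem_connectedComponentIn hak0⟩ fun y hy => (hUsub hy).le
  refine ⟨A, htend, hsubL, ?_⟩
  rintro ⟨hp1, hb'⟩
  refine ⟨hAW, fun B hBW => ?_⟩
  obtain ⟨hB1, hBpr⟩ := hBW
  have hbase : (p 1 : ℤ) ≤ ⌊B ^ Cprod c 1⌋ := by
    have hq := hBpr 1 le_rfl
    have hfl1 : (1 : ℤ) ≤ ⌊B ^ Cprod c 1⌋ := by
      apply Int.le_floor.mpr
      have := Real.one_le_rpow (le_of_lt hB1) (hC 1).le
      exact_mod_cast this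
    have hne1 : ⌊B ^ Cprod c 1⌋ ≠ 1 := hq.ne_one
    rw [hp1]
    omega
  have hall := key 1 le_rfl hb' B ⟨hB1, hBpr⟩ hbase
  exact hAle B fun k hk => haleB B hB1 k hk (hall k hk)
end
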